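/- Let A ∈ ℝ^{n×n}, B, R ∈ ℝ^{n×1}, C ∈ ℝ^{1×n}, and suppose (A,B) is controllable. If C (A + B F)^{k} R = 0 for every integer k ≥ 0 and every row vector F ∈ ℝ^{1×n}, then R C = 0, i.e., R = 0 or C = 0. -/

import Mathlib

/-- The controllability matrix `[B, AB, …, A^{n-1}B]` of a single-input pair `(A, B)`. -/
def ctrbMatrix {n : ℕ} (A : Matrix (Fin n) (Fin n) ℝ) (B : Matrix (Fin n) (Fin 1) ℝ) :
    Matrix (Fin n) (Fin n) ℝ :=
  Matrix.of fun i k => (A ^ (k : ℕ) * B) i 0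

/-- `(A, B)` is controllable if its controllability matrix has full rank. -/
def Controllable {n : ℕ} (A : Matrix (Fin n) (Fin n) ℝ) (B : Matrix (Fin n) (Fin 1) ℝ) : Prop :=
  (ctrbMatrix A B).rank = n

lemma isUnit_of_rank_eq {n : ℕ} (M : Matrix (Fin n) (Fin n) ℝ) (h : M.rank = n) :
    IsUnit M := by
  rw [← Matrix.mulVec_surjective_iff_isUnit]
  have htop : LinearMap.range M.mulVecLin = ⊤ := by
    apply Submodule.eq_top_of_finrank_eq
    simpa [Matrix.rank] using h
  intro y
  exact (LinearMap.range_eq_top.mp htop) y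

theorem stmt9 (n : ℕ) (A : Matrix (Fin n) (Fin n) ℝ) (B R : Matrix (Fin n) (Fin 1) ℝ)
    (C : Matrix (Fin 1) (Fin n) ℝ)
    (hctrb : Controllable A B)
    (h : ∀ (k : ℕ) (F : Matrix (Fin 1) (Fin n) ℝ), (C * (A + B * F) ^ k * R) 0 0 = 0) :
    R * C = 0 ∧ (R = 0 ∨ C = 0) := by
  suffices hsuff : R = 0 ∨ C = 0 by
    refine ⟨?_, hsuff⟩
    rcases hsuff with h0 | h0 <;> simp [h0]
  by_cases hR : R = 0
  · exact Or.inl hR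
  right
  -- pick F0 with (F0 * R) 0 0 = 1
  obtain ⟨i, hi⟩ : ∃ i, R i 0 ≠ 0 := by
    by_contra hc
    push_neg at hc
    exact hR (by ext i j; fin_cases j; simp [hc i])
  set F0 : Matrix (Fin 1) (Fin n) ℝ := Matrix.of fun _ j => if j = i then (R i 0)⁻¹ else 0
    with hF0def
  have hF0R : (F0 * R) 0 0 = 1 := by
    simp [hF0def, Matrix.mul_apply, Finset.sum_ite_eq', inv_mul_cancel₀ hi]
  have hCAk : ∀ k : ℕ, (C * A ^ k * R) 0 0 = 0 := by
    intro k
    simpa using h k 0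
  -- from "C (A+BF)^m = C A^m for all F" at level m, deduce C A^m B = 0
  have hT : ∀ m : ℕ, (∀ F : Matrix (Fin 1) (Fin n) ℝ, C * (A + B * F) ^ m = C * A ^ m) → C * A ^ m * B = 0 := by
    intro m hSm
    have h2 := h (m + 1) F0
    have expand : C * (A + B * F0) ^ (m + 1) * R
        = C * A ^ (m + 1) * R + C * A ^ m * B * (F0 * R) := by
      calc C * (A + B * F0) ^ (m + 1) * R
          = (C * (A + B * F0) ^ m) * ((A + B * F0) * R) := by
            simp [pow_succ, Matrix.mul_assoc]
        _ = (C * A ^ m) * ((A + B * F0) * R) := by rw [hSm F0]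
        _ = C * A ^ (m + 1) * R + C * A ^ m * B * (F0 * R) := by
            simp [pow_succ, Matrix.mul_add, Matrix.add_mul, Matrix.mul_assoc]
    rw [expand] at h2
    have e : (C * A ^ (m + 1) * R) 0 0 + (C * A ^ m * B * (F0 * R)) 0 0 = 0 := by
      simpa [Matrix.add_apply] using h2
    have e2 : (C * A ^ m * B * (F0 * R)) 0 0 = 0 := by
      have := hCAk (m + 1); linarith
    have e3 : (C * A ^ m * B) 0 0 * (F0 * R) 0 0 = 0 := by
      rw [Matrix.mul_apply] at e2
      simpa using e2
    rw [hF0R, mul_one] at e3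
    ext a b
    have ha : a = 0 := Subsingleton.elim a 0
    have hb : b = 0 := Subsingleton.elim b 0
    subst ha; subst hb
    simpa using e3
  have hS : ∀ m : ℕ, ∀ F : Matrix (Fin 1) (Fin n) ℝ, C * (A + B * F) ^ m = C * A ^ m := by
    intro m
    induction m with
    | zero => intro F; simp
    | succ m ih =>
      intro F
      have hTm := hT m ih
      calc C * (A + B * F) ^ (m + 1)
          = (C * (A + B * F) ^ m) * (A + B * F) := by
            simp [pow_succ, Matrix.mul_assoc]
        _ = (C * A ^ m) * (A + B * F) := by rw [ih F]
        _ = C * A ^ (m + 1) + (C * A ^ m * B) * F := by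
            simp [pow_succ, Matrix.mul_add, Matrix.mul_assoc]
        _ = C * A ^ (m + 1) := by rw [hTm]; simp
  have hT' : ∀ m : ℕ, C * A ^ m * B = 0 := fun m => hT m (hS m)
  -- hence C * ctrbMatrix A B = 0
  have hCM : C * ctrbMatrix A B = 0 := by
    ext a k
    have ha : a = 0 := Subsingleton.elim a 0
    subst ha
    have h00 : (C * (A ^ (k : ℕ) * B)) 0 0 = 0 := by
      rw [← Matrix.mul_assoc, hT' (k : ℕ)]; simp
    rw [Matrix.mul_apply] at h00
    calc (C * ctrbMatrix A B) 0 k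
        = ∑ j, C 0 j * (A ^ (k : ℕ) * B) j 0 := by
          rw [Matrix.mul_apply]
          exact Finset.sum_congr rfl fun j _ => by rw [ctrbMatrix]; rfl
      _ = 0 := h00
      _ = (0 : Matrix (Fin 1) (Fin n) ℝ) 0 k := by simp
  have hU : IsUnit (ctrbMatrix A B) := isUnit_of_rank_eq _ hctrb
  obtain ⟨u, hu⟩ := hU
  have hC : C = C * ctrbMatrix A B * (↑u⁻¹ : Matrix (Fin n) (Fin n) ℝ) := by
    rw [Matrix.mul_assoc, ← hu, ← Units.val_mul, mul_inv_cancel, Units.val_one, Matrix.mul_one]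
  rw [hCM] at hC
  simpa using hC
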